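/- With the cyclic setup in the context (p jump points added into each of the intervals of C_k, both 𝒜 and 𝒜_S invariant under σ and σ⁻¹), for every n ∈ ℤ: Sepⁿ_{𝒜_S}(ℝ) = Sepⁿ_𝒜(ℝ) if k ∤ n, and Sepⁿ_{𝒜_S}(ℝ) = Sepⁿ_𝒜(ℝ) ∪ (⋃_{l=1, l ∤ (n/k)}^{p+1} C̃_{k·l}) if k ∣ n. Consequently the commutants satisfy 𝒜_S′ = 𝒜′ \ {Σ_{n∈ℤ} fₙδⁿ ∈ 𝒜′ : fₙ does not vanish identically on C̃_{k·l} for some n and some l with k ∣ n and l ∤ (n/k)}. -/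

import Mathlib

open scoped Classical

noncomputable section

namespace PaperTRS

/-- The algebra of complex valued functions constant on each set of the family `P`. -/
def partAlg {X J : Type*} (P : J → Set X) : Subalgebra ℂ (X → ℂ) where
  carrier := {h | ∀ i, ∀ x ∈ P i, ∀ y ∈ P i, h x = h y}
  mul_mem' := by
    intro a b ha hb i x hx y hy
    simp only [Pi.mul_apply, ha i x hx y hy, hb i x hx y hy]
  add_mem' := by
    intro a b ha hb i x hx y hy
    simp only [Pi.add_apply, ha i x hx y hy, hb i x hx y hy]
  algebraMap_mem' := by intro r i x hx y hy; rfl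

/-- Piecewise constant functions on `ℝ` whose jumps all lie in the set `T`. -/
def pcAlgOn (T : Set ℝ) : Subalgebra ℂ (ℝ → ℂ) where
  carrier := {h | ∀ x y : ℝ, x ∉ T → y ∉ T →
    (∀ u ∈ T, u ∉ Set.Icc (min x y) (max x y)) → h x = h y}
  mul_mem' := by
    intro a b ha hb x y hx hy hxy
    simp only [Pi.mul_apply, ha x y hx hy hxy, hb x y hx hy hxy]
  add_mem' := by
    intro a b ha hb x y hx hy hxy
    simp only [Pi.add_apply, ha x y hx hy hxy, hb x y hx hy hxy]
  algebraMap_mem' := by intro r x y _ _ _; rfl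

/-- Invariance of an algebra of functions under a self-map of `X`. -/
def AlgInvariant {X : Type*} (A : Subalgebra ℂ (X → ℂ)) (σ : X → X) : Prop :=
  ∀ h ∈ A, (h ∘ σ) ∈ A

/-- `Sep A σ n = {x | ∃ h ∈ A, h x ≠ σ̃ⁿ(h) x}`, where `σ̃ⁿ(h) = h ∘ σ⁻ⁿ`. -/
def Sep {X : Type*} (A : Subalgebra ℂ (X → ℂ)) (σ : Equiv.Perm X) (n : ℤ) : Set X :=
  {x | ∃ h ∈ A, h x ≠ h ((σ ^ n)⁻¹ x)}

/-- Twisted convolution product on the crossed product `⋊ ℤ`: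
`(fₙ δⁿ) * (gₘ δᵐ) = fₙ · σ̃ⁿ(gₘ) · δ^{n+m}` extended bilinearly. -/
def cmul {X : Type*} (σ : Equiv.Perm X) (f g : ℤ →₀ (X → ℂ)) : ℤ →₀ (X → ℂ) :=
  f.sum fun n a => g.sum fun m b =>
    Finsupp.single (n + m) (fun x => a x * b ((σ ^ n)⁻¹ x))

/-- Membership of an element `Σ fₙ δⁿ` in the crossed product of the algebra `B` with `ℤ`. -/
def InCrossed {X : Type*} (B : Subalgebra ℂ (X → ℂ)) (f : ℤ →₀ (X → ℂ)) : Prop :=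
  ∀ n, f n ∈ B

/-- The commutant of `A` inside the crossed product `B ⋊ ℤ` (where `A ⊆ B`). -/
def commutant {X : Type*} (A B : Subalgebra ℂ (X → ℂ)) (σ : Equiv.Perm X) :
    Set (ℤ →₀ (X → ℂ)) :=
  {f | InCrossed B f ∧
    ∀ a ∈ A, cmul σ f (Finsupp.single 0 a) = cmul σ (Finsupp.single 0 a) f}

/-- The jump points `t₁ < ⋯ < t_N` extended by `t₀ = -∞` and `t_{N+1} = +∞`. -/
def tE (N : ℕ) (t : Fin N → ℝ) (i : ℕ) : EReal :=
  if h : 1 ≤ i ∧ i ≤ N then ((t ⟨i - 1, by omega⟩ : ℝ) : EReal)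
  else if i = 0 then ⊥ else ⊤

/-- The open interval `I_i = (t_i, t_{i+1})` for `0 ≤ i ≤ N`. -/
def openPiece (N : ℕ) (t : Fin N → ℝ) (i : ℕ) : Set ℝ :=
  {x : ℝ | tE N t i < (x : EReal) ∧ (x : EReal) < tE N t (i + 1)}

/-- The sets of the partition of `ℝ` determined by the jump points: the open
intervals `I_0, …, I_N` together with the singletons `{t_i}`. -/
def pieces (N : ℕ) (t : Fin N → ℝ) : Set (Set ℝ) :=
  {P | (∃ i : ℕ, i ≤ N ∧ P = openPiece N t i) ∨ (∃ i : Fin N, P = {t i})}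

/-- `C_k`: points `x` such that `k` is the smallest positive integer with `x` and
`σᵏ(x)` in one common set of the partition. -/
def Ck (N : ℕ) (t : Fin N → ℝ) (σ : Equiv.Perm ℝ) (k : ℕ) : Set ℝ :=
  {x | IsLeast {j : ℕ | 0 < j ∧ ∃ P ∈ pieces N t, x ∈ P ∧ (σ ^ j) x ∈ P} k}

end PaperTRS
namespace PaperTRS

/-- With `p` points `s i 0 < ⋯ < s i (p-1)` added in the interval `I_{α i}`, the `j`-th
open subinterval of the refined partition of `I_{α i}`, for `j = 0, …, p`. -/
def subPiece (N : ℕ) (t : Fin N → ℝ) {k p : ℕ} (α : Fin k → ℕ)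
    (s : Fin k → Fin p → ℝ) (i : Fin k) (j : Fin (p + 1)) : Set ℝ :=
  {x : ℝ |
    (if hj : (j : ℕ) = 0 then tE N t (α i)
      else ((s i ⟨(j : ℕ) - 1, by have := j.isLt; omega⟩ : ℝ) : EReal)) < (x : EReal) ∧
    (x : EReal) <
      (if hj : (j : ℕ) = p then tE N t (α i + 1)
        else ((s i ⟨(j : ℕ), by have := j.isLt; omega⟩ : ℝ) : EReal))}

/-- The sets of the refined partition of the union of the intervals `I_{α i}`: the open
subintervals determined by the added jump points together with the singleton jump points. -/
def cyclePieces (N : ℕ) (t : Fin N → ℝ) {k p : ℕ} (α : Fin k → ℕ)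
    (s : Fin k → Fin p → ℝ) : Set (Set ℝ) :=
  {P | (∃ i j, P = subPiece N t α s i j) ∨ (∃ i j, P = ({s i j} : Set ℝ))}

/-- `C̃_r`: points `x` of `⋃ᵢ I_{α i}` such that `r` is the smallest positive integer with
`x` and `σʳ(x)` in one common set of the refined partition. -/
def Ctil (N : ℕ) (t : Fin N → ℝ) (σ : Equiv.Perm ℝ) {k p : ℕ} (α : Fin k → ℕ)
    (s : Fin k → Fin p → ℝ) (r : ℕ) : Set ℝ :=
  {x | x ∈ ⋃ i, openPiece N t (α i) ∧
    IsLeast {j : ℕ | 0 < j ∧ ∃ P ∈ cyclePieces N t α s, x ∈ P ∧ (σ ^ j) x ∈ P} r}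

/-- The cyclic setup: `k` pairwise distinct open intervals `I_{α 0}, …, I_{α (k-1)}` of the
original partition, contained in `C_k` and permuted cyclically by `σ`, with `p` jump points
`s i 0 < ⋯ < s i (p-1)` added into each of them, and both the original algebra `𝒜` and the
refined algebra `𝒜_S` invariant under `σ` and `σ⁻¹`. -/
def CyclicSetup (N : ℕ) (t : Fin N → ℝ) (σ : Equiv.Perm ℝ) {k p : ℕ} (α : Fin k → ℕ)
    (s : Fin k → Fin p → ℝ) : Prop :=
  0 < k ∧ (∀ i, α i ≤ N) ∧ Function.Injective α ∧
  (∀ i j, s i j ∈ openPiece N t (α i)) ∧ (∀ i, StrictMono (s i)) ∧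
  (∀ i : Fin k, ∃ i' : Fin k, ((i' : ℕ) = ((i : ℕ) + 1) % k) ∧
    σ '' openPiece N t (α i) = openPiece N t (α i')) ∧
  (∀ i, openPiece N t (α i) ⊆ Ck N t σ k) ∧
  AlgInvariant (pcAlgOn (Set.range t)) σ ∧
  AlgInvariant (pcAlgOn (Set.range t)) σ.symm ∧
  AlgInvariant (pcAlgOn (Set.range t ∪ ⋃ i, Set.range (s i))) σ ∧
  AlgInvariant (pcAlgOn (Set.range t ∪ ⋃ i, Set.range (s i))) σ.symm

/-- `C_k` for the partition `P` of a general set `X`. -/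
def CkGen {X ι : Type*} (P : ι → Set X) (σ : Equiv.Perm X) (k : ℕ) : Set X :=
  {x | IsLeast {j : ℕ | 0 < j ∧ ∃ i, x ∈ P i ∧ (σ ^ j) x ∈ P i} k}

/-- `C̃_r` relative to a family `Q` of refined pieces inside the subset `base` of `X`. -/
def CtilGen {X ι : Type*} (σ : Equiv.Perm X) (Q : ι → Set X) (base : Set X) (r : ℕ) :
    Set X :=
  {x | x ∈ base ∧ IsLeast {j : ℕ | 0 < j ∧ ∃ i, x ∈ Q i ∧ (σ ^ j) x ∈ Q i} r}

/-- `C_∞`: points that never return to the partition set they lie in. -/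
def Cinf {X ι : Type*} (P : ι → Set X) (σ : Equiv.Perm X) : Set X :=
  {x | ∀ k : ℕ, 0 < k → ¬∃ i, x ∈ P i ∧ (σ ^ k) x ∈ P i}

end PaperTRS
namespace PaperTRS


/-- Two points not separated by any function with jumps in `W`. -/
def sameSide (W : Set ℝ) (x y : ℝ) : Prop :=
  x = y ∨ (x ∉ W ∧ y ∉ W ∧ ∀ u ∈ W, u ∉ Set.Icc (min x y) (max x y))

lemma mem_pcAlgOn {W : Set ℝ} {h : ℝ → ℂ} :
    h ∈ pcAlgOn W ↔ ∀ x y : ℝ, x ∉ W → y ∉ W →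
      (∀ u ∈ W, u ∉ Set.Icc (min x y) (max x y)) → h x = h y := Iff.rfl

lemma sameSide_mono {W W' : Set ℝ} (hW : W' ⊆ W) {x y : ℝ} (h : sameSide W x y) :
    sameSide W' x y := by
  rcases h with h | ⟨h1, h2, h3⟩
  · exact Or.inl h
  · exact Or.inr ⟨fun hx => h1 (hW hx), fun hy => h2 (hW hy), fun u hu => h3 u (hW hu)⟩

lemma sameSide.symm {W : Set ℝ} {x y : ℝ} (h : sameSide W x y) : sameSide W y x := by
  rcases h with h | ⟨h1, h2, h3⟩
  · exact Or.inl h.symm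
  · refine Or.inr ⟨h2, h1, fun u hu => ?_⟩
    rw [min_comm, max_comm]; exact h3 u hu

lemma sameSide.refl (W : Set ℝ) (x : ℝ) : sameSide W x x := Or.inl rfl

lemma apply_eq_of_sameSide {W : Set ℝ} {h : ℝ → ℂ} (hh : h ∈ pcAlgOn W) {x y : ℝ}
    (hxy : sameSide W x y) : h x = h y := by
  rcases hxy with h1 | ⟨h1, h2, h3⟩
  · rw [h1]
  · exact hh x y h1 h2 h3

lemma exists_sep {W : Set ℝ} {x y : ℝ} (hxy : ¬ sameSide W x y) :
    ∃ h ∈ pcAlgOn W, h x ≠ h y := by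
  unfold sameSide at hxy
  push_neg at hxy
  obtain ⟨hne, hrest⟩ := hxy
  by_cases hx : x ∈ W
  · refine ⟨fun z => if z = x then 1 else 0, ?_, ?_⟩
    · intro a b ha hb _
      have h1 : a ≠ x := fun h => ha (h ▸ hx)
      have h2 : b ≠ x := fun h => hb (h ▸ hx)
      simp only [if_neg h1, if_neg h2]
    · simp only [if_pos rfl, if_neg (Ne.symm hne)]
      exact one_ne_zero
  by_cases hy : y ∈ W
  · refine ⟨fun z => if z = y then 1 else 0, ?_, ?_⟩
    · intro a b ha hb _
      have h1 : a ≠ y := fun h => ha (h ▸ hy)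
      have h2 : b ≠ y := fun h => hb (h ▸ hy)
      simp only [if_neg h1, if_neg h2]
    · simp only [if_pos rfl, if_neg hne]
      exact zero_ne_one
  obtain ⟨u, hu, huIcc⟩ := hrest hx hy
  obtain ⟨humin, humax⟩ := Set.mem_Icc.1 huIcc
  have hux : u ≠ x := fun h => hx (h ▸ hu)
  have huy : u ≠ y := fun h => hy (h ▸ hu)
  refine ⟨fun z => if u ≤ z then 1 else 0, ?_, ?_⟩
  · intro a b ha hb hab
    by_cases h1 : u ≤ a <;> by_cases h2 : u ≤ b
    · simp [h1, h2]
    · exfalso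
      refine hab u hu (Set.mem_Icc.2 ⟨?_, ?_⟩)
      · exact le_trans (min_le_right a b) (le_of_not_ge h2)
      · exact le_trans h1 (le_max_left a b)
    · exfalso
      refine hab u hu (Set.mem_Icc.2 ⟨?_, ?_⟩)
      · exact le_trans (min_le_left a b) (le_of_not_ge h1)
      · exact le_trans h2 (le_max_right a b)
    · simp [h1, h2]
  · rcases lt_or_gt_of_ne hne with hlt | hlt
    · have hymax : max x y = y := max_eq_right hlt.le
      have hxmin : min x y = x := min_eq_left hlt.le
      have hxu : ¬ u ≤ x := fun h => hux (le_antisymm h (hxmin ▸ humin))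
      have huy' : u ≤ y := hymax ▸ humax
      simp only [if_neg hxu, if_pos huy']
      exact zero_ne_one
    · have hymax : max x y = x := max_eq_left hlt.le
      have hxmin : min x y = y := min_eq_right hlt.le
      have hyu : ¬ u ≤ y := fun h => huy (le_antisymm h (hxmin ▸ humin))
      have hux' : u ≤ x := hymax ▸ humax
      simp only [if_pos hux', if_neg hyu]
      exact one_ne_zero

lemma sep_eq (W : Set ℝ) (σ : Equiv.Perm ℝ) (n : ℤ) :
    Sep (pcAlgOn W) σ n = {x | ¬ sameSide W x ((σ ^ n)⁻¹ x)} := by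
  ext x
  constructor
  · rintro ⟨h, hh, hne⟩ hss
    exact hne (apply_eq_of_sameSide hh hss)
  · intro hss
    obtain ⟨h, hh, hne⟩ := exists_sep hss
    exact ⟨h, hh, hne⟩

lemma sameSide_trans {W : Set ℝ} {x y z : ℝ} (h1 : sameSide W x y) (h2 : sameSide W y z) :
    sameSide W x z := by
  rcases h1 with rfl | ⟨hx, hy, hxy⟩
  · exact h2
  rcases h2 with rfl | ⟨_, hz, hyz⟩
  · exact Or.inr ⟨hx, hy, hxy⟩
  refine Or.inr ⟨hx, hz, fun u hu huIcc => ?_⟩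
  obtain ⟨humin, humax⟩ := Set.mem_Icc.1 huIcc
  rcases le_total u y with huy | huy
  · rcases min_le_iff.1 humin with h | h
    · exact hxy u hu (Set.mem_Icc.2 ⟨le_trans (min_le_left x y) h, le_trans huy (le_max_right x y)⟩)
    · exact hyz u hu (Set.mem_Icc.2 ⟨le_trans (min_le_right y z) h, le_trans huy (le_max_left y z)⟩)
  · rcases le_max_iff.1 humax with h | h
    · exact hxy u hu (Set.mem_Icc.2 ⟨le_trans (min_le_right x y) huy, le_trans h (le_max_left x y)⟩)
    · exact hyz u hu (Set.mem_Icc.2 ⟨le_trans (min_le_left y z) huy, le_trans h (le_max_right y z)⟩)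
section Intervals

variable {N : ℕ} {t : Fin N → ℝ}

lemma tE_zero : tE N t 0 = ⊥ := by simp [tE]

lemma tE_real {i : ℕ} (h1 : 1 ≤ i) (h2 : i ≤ N) :
    tE N t i = ((t ⟨i - 1, by omega⟩ : ℝ) : EReal) := by
  rw [tE, dif_pos ⟨h1, h2⟩]

lemma tE_top {i : ℕ} (h : N < i) : tE N t i = ⊤ := by
  rw [tE, dif_neg (by omega), if_neg (by omega)]

lemma tE_mono (ht : StrictMono t) {i j : ℕ} (hij : i ≤ j) (hj : j ≤ N + 1) :
    tE N t i ≤ tE N t j := by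
  rcases Nat.eq_zero_or_pos i with rfl | hi
  · rw [tE_zero]; exact bot_le
  rcases Nat.lt_or_ge N j with hjN | hjN
  · rw [tE_top hjN]; exact le_top
  rw [tE_real hi (le_trans hij hjN), tE_real (le_trans hi hij) hjN]
  exact_mod_cast ht.monotone (by simp [Fin.mk_le_mk]; omega)

lemma openPiece_disjoint (ht : StrictMono t) {a b : ℕ} (ha : a ≤ N) (hb : b ≤ N)
    (hab : a ≠ b) {x : ℝ} (hxa : x ∈ openPiece N t a) (hxb : x ∈ openPiece N t b) :
    False := by
  rcases Nat.lt_or_ge a b with h | h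
  · have h1 : tE N t (a+1) ≤ tE N t b := tE_mono ht (by omega) (by omega)
    exact absurd (lt_trans (lt_of_lt_of_le hxa.2 h1) hxb.1) (lt_irrefl _)
  · have h' : b < a := by omega
    have h1 : tE N t (b+1) ≤ tE N t a := tE_mono ht (by omega) (by omega)
    exact absurd (lt_trans (lt_of_lt_of_le hxb.2 h1) hxa.1) (lt_irrefl _)

lemma t_not_mem_openPiece (ht : StrictMono t) {i : ℕ} (hi : i ≤ N) (j : Fin N) :
    t j ∉ openPiece N t i := by
  intro hmem
  have hj : tE N t ((j : ℕ) + 1) = ((t j : ℝ) : EReal) := by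
    rw [tE_real (by omega) (by omega)]
    congr 1
  rcases Nat.lt_or_ge (j : ℕ) i with h | h
  · have h1 : tE N t ((j:ℕ)+1) ≤ tE N t i := tE_mono ht (by omega) (by omega)
    rw [hj] at h1
    exact absurd (lt_of_le_of_lt h1 hmem.1) (lt_irrefl _)
  · have h1 : tE N t (i+1) ≤ tE N t ((j:ℕ)+1) := tE_mono ht (by omega) (by omega)
    rw [hj] at h1
    exact absurd (lt_of_lt_of_le hmem.2 h1) (lt_irrefl _)

lemma openPiece_disjoint_T (ht : StrictMono t) {i : ℕ} (hi : i ≤ N) {x : ℝ}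
    (hx : x ∈ openPiece N t i) : x ∉ Set.range t := by
  rintro ⟨j, rfl⟩
  exact t_not_mem_openPiece ht hi j hx

lemma mem_openPiece_of_between (ht : StrictMono t) {i : ℕ} (hi : i ≤ N) {x y : ℝ}
    (hx : x ∈ openPiece N t i) (hy : y ∉ Set.range t)
    (hno : ∀ u ∈ Set.range t, u ∉ Set.Icc (min x y) (max x y)) :
    y ∈ openPiece N t i := by
  obtain ⟨hx1, hx2⟩ := hx
  constructor
  · by_cases h1 : 1 ≤ i
    · rw [tE_real h1 hi]
      rw [tE_real h1 hi] at hx1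
      set u : ℝ := t ⟨i - 1, by omega⟩ with hu
      have hux : u < x := by exact_mod_cast hx1
      by_contra hcon
      have hyu : y ≤ u := by
        have := not_lt.1 hcon
        exact_mod_cast this
      have huy' : y ≠ u := fun h => hy ⟨_, h.symm⟩
      refine hno u ⟨_, rfl⟩ (Set.mem_Icc.2 ⟨?_, ?_⟩)
      · exact le_trans (min_le_right x y) hyu
      · exact le_trans hux.le (le_max_left x y)
    · have : i = 0 := by omega
      rw [this, tE_zero]
      exact EReal.bot_lt_coe y
  · by_cases h1 : i + 1 ≤ N
    · rw [tE_real (by omega) h1]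
      rw [tE_real (by omega) h1] at hx2
      set u : ℝ := t ⟨i + 1 - 1, by omega⟩ with hu
      have hux : x < u := by exact_mod_cast hx2
      by_contra hcon
      have hyu : u ≤ y := by
        have := not_lt.1 hcon
        exact_mod_cast this
      refine hno u ⟨_, rfl⟩ (Set.mem_Icc.2 ⟨?_, ?_⟩)
      · exact le_trans (min_le_left x y) hux.le
      · exact le_trans hyu (le_max_right x y)
    · rw [tE_top (by omega)]
      exact EReal.coe_lt_top y

end Intervals
section Invariance

variable {U : Set ℝ} {σ : Equiv.Perm ℝ}

lemma sameSide_apply_iff (hinv : AlgInvariant (pcAlgOn U) σ)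
    (hinv' : AlgInvariant (pcAlgOn U) σ.symm) (x y : ℝ) :
    sameSide U (σ x) (σ y) ↔ sameSide U x y := by
  constructor
  · intro hss
    by_contra hcon
    obtain ⟨h, hh, hne⟩ := exists_sep hcon
    have hmem : (h ∘ σ.symm) ∈ pcAlgOn U := hinv' h hh
    have := apply_eq_of_sameSide hmem hss
    simp only [Function.comp_apply, Equiv.symm_apply_apply] at this
    exact hne this
  · intro hss
    by_contra hcon
    obtain ⟨h, hh, hne⟩ := exists_sep hcon
    have hmem : (h ∘ σ) ∈ pcAlgOn U := hinv h hh
    have := apply_eq_of_sameSide hmem hss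
    exact hne this

lemma sameSide_pow_iff (hinv : AlgInvariant (pcAlgOn U) σ)
    (hinv' : AlgInvariant (pcAlgOn U) σ.symm) (m : ℕ) (x y : ℝ) :
    sameSide U ((σ ^ m) x) ((σ ^ m) y) ↔ sameSide U x y := by
  induction m generalizing x y with
  | zero => simp
  | succ n ih =>
    have h1 : ∀ z : ℝ, (σ ^ (n+1)) z = (σ ^ n) (σ z) := by
      intro z
      rw [pow_succ]
      rfl
    rw [h1, h1, ih, sameSide_apply_iff hinv hinv']

lemma sameSide_zpow_iff (hinv : AlgInvariant (pcAlgOn U) σ)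
    (hinv' : AlgInvariant (pcAlgOn U) σ.symm) (m : ℤ) (x y : ℝ) :
    sameSide U ((σ ^ m) x) ((σ ^ m) y) ↔ sameSide U x y := by
  rcases le_or_gt 0 m with h | h
  · lift m to ℕ using h
    rw [zpow_natCast]
    exact sameSide_pow_iff hinv hinv' m x y
  · set n : ℕ := (-m).toNat with hn
    have hm : m = -(n : ℤ) := by omega
    have key := sameSide_pow_iff hinv hinv' n ((σ ^ m) x) ((σ ^ m) y)
    have h2 : ∀ z : ℝ, (σ ^ (n:ℕ)) ((σ ^ m) z) = z := by
      intro z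
      have : (σ ^ (n : ℤ)) ((σ ^ m) z) = ((σ ^ (n:ℤ)) * (σ ^ m)) z := rfl
      rw [← zpow_natCast σ n, this, ← zpow_add, hm]
      simp
    rw [h2, h2] at key
    exact key.symm

/-- Closure of the "return set" under addition. -/
lemma returns_add (hinv : AlgInvariant (pcAlgOn U) σ)
    (hinv' : AlgInvariant (pcAlgOn U) σ.symm) {x : ℝ} {a b : ℤ}
    (ha : sameSide U x ((σ ^ a) x)) (hb : sameSide U x ((σ ^ b) x)) :
    sameSide U x ((σ ^ (a + b)) x) := by
  have h1 : sameSide U ((σ ^ a) x) ((σ ^ (a + b)) x) := by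
    have := (sameSide_zpow_iff hinv hinv' a x ((σ ^ b) x)).2 hb
    have heq : (σ ^ a) ((σ ^ b) x) = (σ ^ (a + b)) x := by
      rw [← Equiv.Perm.mul_apply, ← zpow_add]
    rwa [heq] at this
  exact sameSide_trans ha h1

lemma returns_neg (hinv : AlgInvariant (pcAlgOn U) σ)
    (hinv' : AlgInvariant (pcAlgOn U) σ.symm) {x : ℝ} {a : ℤ}
    (ha : sameSide U x ((σ ^ a) x)) :
    sameSide U x ((σ ^ (-a)) x) := by
  have := (sameSide_zpow_iff hinv hinv' (-a) x ((σ ^ a) x)).2 ha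
  have heq : (σ ^ (-a)) ((σ ^ a) x) = x := by
    rw [← Equiv.Perm.mul_apply, ← zpow_add]
    simp
  rw [heq] at this
  exact this.symm

lemma returns_zsmul (hinv : AlgInvariant (pcAlgOn U) σ)
    (hinv' : AlgInvariant (pcAlgOn U) σ.symm) {x : ℝ} {a : ℤ}
    (ha : sameSide U x ((σ ^ a) x)) (q : ℤ) :
    sameSide U x ((σ ^ (q * a)) x) := by
  induction q using Int.induction_on with
  | zero => simpa using sameSide.refl U x
  | succ n ih =>
    have : ((n : ℤ) + 1) * a = n * a + a := by ring
    rw [this]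
    exact returns_add hinv hinv' ih ha
  | pred n ih =>
    have : (-(n : ℤ) - 1) * a = -(n:ℤ) * a + (-a) := by ring
    rw [this]
    exact returns_add hinv hinv' ih (returns_neg hinv hinv' ha)

/-- If `r` is the least positive return exponent, returns are exactly multiples of `r`. -/
lemma returns_iff_dvd (hinv : AlgInvariant (pcAlgOn U) σ)
    (hinv' : AlgInvariant (pcAlgOn U) σ.symm) {x : ℝ} {r : ℤ}
    (hr : IsLeast {j : ℤ | 0 < j ∧ sameSide U x ((σ ^ j) x)} r) (n : ℤ) :
    sameSide U x ((σ ^ n) x) ↔ r ∣ n := by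
  obtain ⟨⟨hrpos, hrret⟩, hmin⟩ := hr
  constructor
  · intro hret
    by_contra hdvd
    set m : ℤ := n % r with hm
    have hm0 : 0 ≤ m := Int.emod_nonneg n (by omega)
    have hmr : m < r := Int.emod_lt_of_pos n hrpos
    have hmne : m ≠ 0 := fun h => hdvd (Int.dvd_of_emod_eq_zero (hm ▸ h))
    have hmem : sameSide U x ((σ ^ m) x) := by
      have : m = n + (-(n / r)) * r := by
        rw [hm]
        linear_combination Int.emod_add_mul_ediv n r
      rw [this]
      exact returns_add hinv hinv' hret (returns_zsmul hinv hinv' hrret _)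
    have := hmin ⟨by omega, hmem⟩
    omega
  · rintro ⟨c, rfl⟩
    rw [mul_comm]
    exact returns_zsmul hinv hinv' hrret c

end Invariance
section Dynamics

variable {N : ℕ} {t : Fin N → ℝ} {σ : Equiv.Perm ℝ} {k p : ℕ} {α : Fin k → ℕ}
  {s : Fin k → Fin p → ℝ}

lemma mem_I_unique (ht : StrictMono t) (hαle : ∀ i, α i ≤ N) (hαinj : Function.Injective α)
    {x : ℝ} {i i' : Fin k} (hx : x ∈ openPiece N t (α i)) (hx' : x ∈ openPiece N t (α i')) :
    i = i' := by
  by_contra hne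
  exact openPiece_disjoint ht (hαle i) (hαle i') (fun h => hne (hαinj h)) hx hx'

lemma image_pow
    (hcyc : ∀ i : Fin k, ∃ i' : Fin k, ((i' : ℕ) = ((i : ℕ) + 1) % k) ∧
      σ '' openPiece N t (α i) = openPiece N t (α i'))
    (m : ℕ) (i : Fin k) :
    ∃ i' : Fin k, ((i' : ℕ) = ((i : ℕ) + m) % k) ∧
      (σ ^ m) '' openPiece N t (α i) = openPiece N t (α i') := by
  induction m with
  | zero =>
    exact ⟨i, by rw [Nat.add_zero, Nat.mod_eq_of_lt i.isLt], by simp⟩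
  | succ n ih =>
    obtain ⟨i', hi', himg⟩ := ih
    obtain ⟨i'', hi'', himg'⟩ := hcyc i'
    refine ⟨i'', ?_, ?_⟩
    · rw [hi'', hi']
      show ((i : ℕ) + n) % k + 1 ≡ (i : ℕ) + (n + 1) [MOD k]
      have : ((i:ℕ) + n) % k + 1 ≡ ((i:ℕ) + n) + 1 [MOD k] :=
        (Nat.mod_modEq ((i:ℕ) + n) k).add_right 1
      simpa [Nat.add_assoc] using this
    · rw [← himg', ← himg, ← Set.image_comp]
      congr 1
      ext z
      rw [pow_succ']
      rfl

lemma pow_mem_I (ht : StrictMono t) (hαle : ∀ i, α i ≤ N) (hαinj : Function.Injective α)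
    (hcyc : ∀ i : Fin k, ∃ i' : Fin k, ((i' : ℕ) = ((i : ℕ) + 1) % k) ∧
      σ '' openPiece N t (α i) = openPiece N t (α i'))
    {x : ℝ} {i : Fin k} (hx : x ∈ openPiece N t (α i)) {m : ℕ}
    (hm : (σ ^ m) x ∈ openPiece N t (α i)) : (k : ℤ) ∣ (m : ℤ) := by
  obtain ⟨i', hi', himg⟩ := image_pow hcyc m i
  have hmem : (σ ^ m) x ∈ openPiece N t (α i') := himg ▸ ⟨x, hx, rfl⟩
  have : i' = i := mem_I_unique ht hαle hαinj hmem hm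
  rw [this] at hi'
  have hik : (i : ℕ) % k = (i : ℕ) := Nat.mod_eq_of_lt i.isLt
  have : (i:ℕ) + m ≡ (i:ℕ) [MOD k] := by
    show ((i:ℕ) + m) % k = (i:ℕ) % k
    rw [← hi', hik]
  have := this.dvd
  simpa using this

lemma pow_mem_I_of_dvd (ht : StrictMono t) (hαle : ∀ i, α i ≤ N) (hαinj : Function.Injective α)
    (hcyc : ∀ i : Fin k, ∃ i' : Fin k, ((i' : ℕ) = ((i : ℕ) + 1) % k) ∧
      σ '' openPiece N t (α i) = openPiece N t (α i'))
    {x : ℝ} {i : Fin k} (hx : x ∈ openPiece N t (α i)) {m : ℕ} (hdvd : k ∣ m) :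
    (σ ^ m) x ∈ openPiece N t (α i) := by
  obtain ⟨i', hi', himg⟩ := image_pow hcyc m i
  obtain ⟨c, rfl⟩ := hdvd
  have : ((i:ℕ) + k * c) % k = (i:ℕ) % k := Nat.add_mul_mod_self_left (i:ℕ) k c
  rw [this, Nat.mod_eq_of_lt i.isLt] at hi'
  have : i' = i := Fin.ext hi'
  rw [this] at himg
  exact himg ▸ ⟨x, hx, rfl⟩

lemma zpow_mem_I_iff (ht : StrictMono t) (hαle : ∀ i, α i ≤ N) (hαinj : Function.Injective α)
    (hcyc : ∀ i : Fin k, ∃ i' : Fin k, ((i' : ℕ) = ((i : ℕ) + 1) % k) ∧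
      σ '' openPiece N t (α i) = openPiece N t (α i'))
    {x : ℝ} {i : Fin k} (hx : x ∈ openPiece N t (α i)) (n : ℤ) :
    (σ ^ n) x ∈ openPiece N t (α i) ↔ (k : ℤ) ∣ n := by
  rcases le_or_gt 0 n with h | h
  · lift n to ℕ using h
    rw [zpow_natCast]
    constructor
    · exact pow_mem_I ht hαle hαinj hcyc hx
    · intro hdvd
      exact pow_mem_I_of_dvd ht hαle hαinj hcyc hx (Int.ofNat_dvd.mp hdvd)
  · set m : ℕ := (-n).toNat with hmdef
    have hm' : (m : ℤ) = -n := Int.toNat_of_nonneg (by omega)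
    have hmn : n = -(m : ℤ) := by rw [hm', neg_neg]
    have hcomp : ∀ z : ℝ, (σ ^ m) ((σ ^ n) z) = z := by
      intro z
      have : (σ ^ (m:ℤ)) ((σ ^ n) z) = ((σ ^ (m:ℤ)) * (σ ^ n)) z := rfl
      rw [← zpow_natCast σ m] 
      rw [this, ← zpow_add, hmn]
      simp
    constructor
    · intro hmem
      have := pow_mem_I ht hαle hαinj hcyc hmem (x := (σ ^ n) x) (m := m)
      rw [hcomp x] at this
      have hdvd := this hx
      rw [hmn]
      exact dvd_neg.2 hdvd
    · intro hdvd
      have hdvd' : k ∣ m := by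
        have h2 : (k:ℤ) ∣ (m:ℤ) := by rw [hm']; exact dvd_neg.2 hdvd
        exact_mod_cast h2
      obtain ⟨z, hz, hze⟩ : x ∈ (σ ^ m) '' openPiece N t (α i) := by
        obtain ⟨i', hi', himg⟩ := image_pow hcyc m i
        obtain ⟨c, hc⟩ := hdvd'
        have h3 : ((i:ℕ) + m) % k = (i:ℕ) % k := by
          rw [hc]; exact Nat.add_mul_mod_self_left (i:ℕ) k c
        rw [h3, Nat.mod_eq_of_lt i.isLt] at hi'
        rw [himg, Fin.ext hi']
        exact hx
      have hzx : z = (σ ^ n) x := (σ ^ m).injective (hze.trans (hcomp x).symm)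
      rwa [← hzx]

end Dynamics
section SubPieces

variable {N : ℕ} {t : Fin N → ℝ} {σ : Equiv.Perm ℝ} {k p : ℕ} {α : Fin k → ℕ}
  {s : Fin k → Fin p → ℝ}

lemma lower_push {V : Set ℝ} {u x y : ℝ} (hu : u ∈ V)
    (hno : ∀ v ∈ V, v ∉ Set.Icc (min x y) (max x y)) (hux : u < x) : u < y := by
  by_contra hcon
  exact hno u hu (Set.mem_Icc.2 ⟨le_trans (min_le_right x y) (not_lt.1 hcon),
    le_trans hux.le (le_max_left x y)⟩)

lemma upper_push {V : Set ℝ} {u x y : ℝ} (hu : u ∈ V)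
    (hno : ∀ v ∈ V, v ∉ Set.Icc (min x y) (max x y)) (hux : x < u) : y < u := by
  by_contra hcon
  exact hno u hu (Set.mem_Icc.2 ⟨le_trans (min_le_left x y) hux.le,
    le_trans (not_lt.1 hcon) (le_max_right x y)⟩)

lemma sPoint_cases (ht : StrictMono t) (hαle : ∀ i, α i ≤ N) (hαinj : Function.Injective α)
    (hs_mem : ∀ i j, s i j ∈ openPiece N t (α i)) {x : ℝ} {i : Fin k}
    (hx : x ∈ openPiece N t (α i))
    (hxU : x ∈ Set.range t ∪ ⋃ i, Set.range (s i)) : ∃ j, x = s i j := by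
  rcases hxU with hxT | hxS
  · exact absurd hxT (openPiece_disjoint_T ht (hαle i) hx)
  · obtain ⟨i', j', hj'⟩ : ∃ i' j', s i' j' = x := by
      obtain ⟨A, ⟨i', rfl⟩, hA⟩ := hxS
      obtain ⟨j', hj'⟩ := hA
      exact ⟨i', j', hj'⟩
    have : x ∈ openPiece N t (α i') := hj' ▸ hs_mem i' j'
    have hii : i' = i := mem_I_unique ht hαle hαinj this hx
    exact ⟨j', by rw [← hj', hii]⟩

lemma subPiece_subset (hs_mem : ∀ i j, s i j ∈ openPiece N t (α i)) (i : Fin k)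
    (j : Fin (p + 1)) : subPiece N t α s i j ⊆ openPiece N t (α i) := by
  intro x hx
  obtain ⟨h1, h2⟩ := hx
  constructor
  · by_cases h0 : (j : ℕ) = 0
    · rwa [dif_pos h0] at h1
    · rw [dif_neg h0] at h1
      exact lt_trans (hs_mem i _).1 h1
  · by_cases hp' : (j : ℕ) = p
    · rwa [dif_pos hp'] at h2
    · rw [dif_neg hp'] at h2
      exact lt_trans h2 (hs_mem i _).2

lemma s_not_mem_subPiece (hs_mono : ∀ i, StrictMono (s i)) (i : Fin k) (j : Fin (p + 1))
    (j' : Fin p) : s i j' ∉ subPiece N t α s i j := by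
  rintro ⟨h1, h2⟩
  by_cases h0 : (j : ℕ) = 0
  · by_cases hp' : (j : ℕ) = p
    · have := j'.isLt; omega
    · rw [dif_neg hp'] at h2
      have h2' : s i j' < s i ⟨(j:ℕ), by omega⟩ := by exact_mod_cast h2
      have := (hs_mono i).lt_iff_lt.1 h2'
      have : (j' : ℕ) < (j : ℕ) := this
      omega
  · rw [dif_neg h0] at h1
    have h1' : s i ⟨(j:ℕ)-1, by omega⟩ < s i j' := by exact_mod_cast h1
    have hlt1 : ((j:ℕ) - 1) < (j' : ℕ) := (hs_mono i).lt_iff_lt.1 h1'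
    by_cases hp' : (j : ℕ) = p
    · have := j'.isLt; omega
    · rw [dif_neg hp'] at h2
      have h2' : s i j' < s i ⟨(j:ℕ), by omega⟩ := by exact_mod_cast h2
      have hlt2 : (j' : ℕ) < (j : ℕ) := (hs_mono i).lt_iff_lt.1 h2'
      omega

lemma subPiece_disjoint_U (ht : StrictMono t) (hαle : ∀ i, α i ≤ N)
    (hαinj : Function.Injective α) (hs_mem : ∀ i j, s i j ∈ openPiece N t (α i))
    (hs_mono : ∀ i, StrictMono (s i)) {i : Fin k} {j : Fin (p + 1)} {x : ℝ}
    (hx : x ∈ subPiece N t α s i j) : x ∉ Set.range t ∪ ⋃ i, Set.range (s i) := by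
  intro hxU
  have hxI : x ∈ openPiece N t (α i) := subPiece_subset hs_mem i j hx
  obtain ⟨j', hj'⟩ := sPoint_cases ht hαle hαinj hs_mem hxI hxU
  exact s_not_mem_subPiece hs_mono i j j' (hj' ▸ hx)

lemma mem_subPiece_of_between (ht : StrictMono t) (hαle : ∀ i, α i ≤ N)
    (hs_mem : ∀ i j, s i j ∈ openPiece N t (α i)) {i : Fin k} {j : Fin (p + 1)} {x y : ℝ}
    (hx : x ∈ subPiece N t α s i j)
    (hno : ∀ u ∈ Set.range t ∪ ⋃ i, Set.range (s i),
      u ∉ Set.Icc (min x y) (max x y)) :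
    y ∈ subPiece N t α s i j := by
  have hNi := hαle i
  obtain ⟨h1, h2⟩ := hx
  constructor
  · by_cases h0 : (j : ℕ) = 0
    · rw [dif_pos h0] at h1 ⊢
      by_cases hα : 1 ≤ α i
      · rw [tE_real hα (hαle i)] at h1 ⊢
        have h1' : t ⟨α i - 1, by omega⟩ < x := by exact_mod_cast h1
        have := lower_push (Or.inl ⟨_, rfl⟩) hno h1'
        exact_mod_cast this
      · have : α i = 0 := by omega
        rw [this, tE_zero]
        exact EReal.bot_lt_coe y
    · rw [dif_neg h0] at h1 ⊢
      have h1' : s i ⟨(j:ℕ)-1, by omega⟩ < x := by exact_mod_cast h1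
      have hu : s i ⟨(j:ℕ)-1, by omega⟩ ∈ Set.range t ∪ ⋃ i, Set.range (s i) :=
        Or.inr (Set.mem_iUnion.2 ⟨i, ⟨_, rfl⟩⟩)
      have := lower_push hu hno h1'
      exact_mod_cast this
  · by_cases hp' : (j : ℕ) = p
    · rw [dif_pos hp'] at h2 ⊢
      by_cases hα : α i + 1 ≤ N
      · rw [tE_real (by omega) hα] at h2 ⊢
        have h2' : x < t ⟨α i + 1 - 1, by omega⟩ := by exact_mod_cast h2
        have := upper_push (Or.inl ⟨_, rfl⟩) hno h2'
        exact_mod_cast this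
      · rw [tE_top (by omega)]
        exact EReal.coe_lt_top y
    · rw [dif_neg hp'] at h2 ⊢
      have h2' : x < s i ⟨(j:ℕ), by omega⟩ := by exact_mod_cast h2
      have hu : s i ⟨(j:ℕ), by omega⟩ ∈ Set.range t ∪ ⋃ i, Set.range (s i) :=
        Or.inr (Set.mem_iUnion.2 ⟨i, ⟨_, rfl⟩⟩)
      have := upper_push hu hno h2'
      exact_mod_cast this

lemma mem_subPiece_of_sameSide (ht : StrictMono t) (hαle : ∀ i, α i ≤ N)
    (hs_mem : ∀ i j, s i j ∈ openPiece N t (α i)) {i : Fin k} {j : Fin (p + 1)} {x y : ℝ}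
    (hx : x ∈ subPiece N t α s i j)
    (hss : sameSide (Set.range t ∪ ⋃ i, Set.range (s i)) x y) :
    y ∈ subPiece N t α s i j := by
  rcases hss with rfl | ⟨_, _, hno⟩
  · exact hx
  · exact mem_subPiece_of_between ht hαle hs_mem hx hno

lemma sameSide_of_same_subPiece (ht : StrictMono t) (hαle : ∀ i, α i ≤ N)
    (hαinj : Function.Injective α) (hs_mem : ∀ i j, s i j ∈ openPiece N t (α i))
    (hs_mono : ∀ i, StrictMono (s i)) {i : Fin k} {j : Fin (p + 1)} {x y : ℝ}
    (hx : x ∈ subPiece N t α s i j) (hy : y ∈ subPiece N t α s i j) :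
    sameSide (Set.range t ∪ ⋃ i, Set.range (s i)) x y := by
  refine Or.inr ⟨subPiece_disjoint_U ht hαle hαinj hs_mem hs_mono hx,
    subPiece_disjoint_U ht hαle hαinj hs_mem hs_mono hy, fun u hu huIcc => ?_⟩
  obtain ⟨humin, humax⟩ := Set.mem_Icc.1 huIcc
  have humem : u ∈ subPiece N t α s i j := by
    constructor
    · rcases min_cases x y with ⟨hmin, _⟩ | ⟨hmin, _⟩ <;> rw [hmin] at humin
      · exact lt_of_lt_of_le hx.1 (by exact_mod_cast humin)
      · exact lt_of_lt_of_le hy.1 (by exact_mod_cast humin)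
    · rcases max_cases x y with ⟨hmax, _⟩ | ⟨hmax, _⟩ <;> rw [hmax] at humax
      · exact lt_of_le_of_lt (by exact_mod_cast humax : (u:EReal) ≤ (x:EReal)) hx.2
      · exact lt_of_le_of_lt (by exact_mod_cast humax : (u:EReal) ≤ (y:EReal)) hy.2
  exact subPiece_disjoint_U ht hαle hαinj hs_mem hs_mono humem hu

lemma sameSide_sPoint_iff {U : Set ℝ} {x y : ℝ} (hx : x ∈ U) :
    sameSide U x y ↔ y = x := by
  constructor
  · rintro (rfl | ⟨h1, _, _⟩)
    · rfl
    · exact absurd hx h1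
  · rintro rfl
    exact sameSide.refl _ _

lemma exists_subPiece (hs_mono : ∀ i, StrictMono (s i)) {x : ℝ} {i : Fin k}
    (hx : x ∈ openPiece N t (α i))
    (hxU : x ∉ Set.range t ∪ ⋃ i, Set.range (s i)) :
    ∃ j : Fin (p + 1), x ∈ subPiece N t α s i j := by
  have hxs : ∀ j' : Fin p, s i j' ≠ x :=
    fun j' h => hxU (Or.inr (Set.mem_iUnion.2 ⟨i, ⟨j', h⟩⟩))
  by_cases hall : ∀ j' : Fin p, s i j' < x
  · refine ⟨⟨p, by omega⟩, ?_, ?_⟩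
    · split_ifs with h
      · exact hx.1
      · exact_mod_cast hall _
    · split_ifs with h
      · exact hx.2
      · exact absurd rfl h
  · push_neg at hall
    obtain ⟨j₀, hj₀⟩ := hall
    have hj₀' : x < s i j₀ := lt_of_le_of_ne hj₀ (Ne.symm (hxs j₀))
    have hne : (Finset.univ.filter (fun j' : Fin p => x < s i j')).Nonempty := by
      refine ⟨j₀, ?_⟩
      simp only [Finset.mem_filter, Finset.mem_univ, true_and]
      exact hj₀'
    set m := (Finset.univ.filter (fun j' : Fin p => x < s i j')).min' hne with hm
    have hmF := (Finset.univ.filter (fun j' : Fin p => x < s i j')).min'_mem hne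
    rw [← hm] at hmF
    have hxm : x < s i m := (Finset.mem_filter.1 hmF).2
    have hmp : (m : ℕ) < p := m.isLt
    refine ⟨⟨(m : ℕ), by omega⟩, ?_, ?_⟩
    · split_ifs with h
      · exact hx.1
      · have h0 : (m : ℕ) ≠ 0 := h
        have hnotF : (⟨(m:ℕ)-1, by omega⟩ : Fin p) ∉
            Finset.univ.filter (fun j' : Fin p => x < s i j') := by
          intro hmem
          have hle : m ≤ (⟨(m:ℕ)-1, by omega⟩ : Fin p) := Finset.min'_le _ _ hmem
          have : (m : ℕ) ≤ (m : ℕ) - 1 := hle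
          omega
        have hnotlt : ¬ x < s i ⟨(m:ℕ)-1, by omega⟩ := by
          intro hlt
          exact hnotF (Finset.mem_filter.2 ⟨Finset.mem_univ _, hlt⟩)
        have hlt : s i ⟨(m:ℕ)-1, by omega⟩ < x :=
          lt_of_le_of_ne (not_lt.1 hnotlt) (hxs ⟨(m:ℕ)-1, by omega⟩)
        exact_mod_cast hlt
    · split_ifs with h
      · have h' : (m : ℕ) = p := h
        omega
      · have hxm' := hxm
        exact_mod_cast hxm'

end SubPieces
section MainPoint

variable {N : ℕ} {t : Fin N → ℝ} {σ : Equiv.Perm ℝ} {k p : ℕ} {α : Fin k → ℕ}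
  {s : Fin k → Fin p → ℝ}

lemma sameSide_shift {U : Set ℝ} (hinv : AlgInvariant (pcAlgOn U) σ)
    (hinv' : AlgInvariant (pcAlgOn U) σ.symm) {x : ℝ} {a b : ℤ}
    (h : sameSide U ((σ ^ a) x) ((σ ^ b) x)) : sameSide U x ((σ ^ (b - a)) x) := by
  have h2 := (sameSide_zpow_iff hinv hinv' (-a) _ _).2 h
  have e1 : (σ ^ (-a)) ((σ ^ a) x) = x := by
    rw [← Equiv.Perm.mul_apply, ← zpow_add]; simp
  have e2 : (σ ^ (-a)) ((σ ^ b) x) = (σ ^ (b - a)) x := by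
    rw [← Equiv.Perm.mul_apply, ← zpow_add, neg_add_eq_sub]
  rwa [e1, e2] at h2

lemma sameSide_pull {U : Set ℝ} (hinv : AlgInvariant (pcAlgOn U) σ)
    (hinv' : AlgInvariant (pcAlgOn U) σ.symm) {x w : ℝ} (a : ℤ)
    (h : sameSide U ((σ ^ a) x) w) : sameSide U x ((σ ^ (-a)) w) := by
  have hrw : w = (σ ^ a) ((σ ^ (-a)) w) := by
    rw [← Equiv.Perm.mul_apply, ← zpow_add]; simp
  rw [hrw] at h
  exact (sameSide_zpow_iff hinv hinv' a _ _).1 h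

lemma exists_real_btwn_eREal {L : EReal} {x : ℝ} (h : L < (x : EReal)) :
    ∃ w : ℝ, L < (w : EReal) ∧ w < x := by
  induction L with
  | bot => exact ⟨x - 1, EReal.bot_lt_coe _, by linarith⟩
  | coe a =>
    have ha : a < x := by exact_mod_cast h
    exact ⟨(a + x) / 2, by exact_mod_cast (by linarith : a < (a + x) / 2), by linarith⟩
  | top => exact absurd h (not_top_lt)

lemma subPiece_second_point {i : Fin k} {j : Fin (p + 1)} {x : ℝ}
    (hx : x ∈ subPiece N t α s i j) :
    ∃ w, w ∈ subPiece N t α s i j ∧ w ≠ x := by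
  obtain ⟨h1, h2⟩ := hx
  obtain ⟨w, hw1, hw2⟩ := exists_real_btwn_eREal h1
  exact ⟨w, ⟨hw1, lt_trans (by exact_mod_cast hw2) h2⟩, ne_of_lt hw2⟩

lemma return_iff (ht : StrictMono t) (hαle : ∀ i, α i ≤ N) (hαinj : Function.Injective α)
    (hs_mem : ∀ i j, s i j ∈ openPiece N t (α i)) (hs_mono : ∀ i, StrictMono (s i))
    {x : ℝ} {i : Fin k} (hx : x ∈ openPiece N t (α i)) (j : ℕ) :
    (∃ P ∈ cyclePieces N t α s, x ∈ P ∧ (σ ^ j) x ∈ P) ↔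
      sameSide (Set.range t ∪ ⋃ i, Set.range (s i)) x ((σ ^ (j : ℤ)) x) := by
  rw [zpow_natCast]
  constructor
  · rintro ⟨P, hP, hxP, hσP⟩
    rcases hP with ⟨i', j', rfl⟩ | ⟨i', j', rfl⟩
    · exact sameSide_of_same_subPiece ht hαle hαinj hs_mem hs_mono hxP hσP
    · have h1 : x = s i' j' := hxP
      have h2 : (σ ^ j) x = s i' j' := hσP
      rw [← h1] at h2
      rw [h2]
      exact sameSide.refl _ _
  · intro hss
    by_cases hxU : x ∈ Set.range t ∪ ⋃ i, Set.range (s i)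
    · obtain ⟨j'', hj''⟩ := sPoint_cases ht hαle hαinj hs_mem hx hxU
      have heq : (σ ^ j) x = x := (sameSide_sPoint_iff hxU).1 hss
      exact ⟨{s i j''}, Or.inr ⟨i, j'', rfl⟩, by rw [← hj'']; rfl, by rw [heq, ← hj'']; rfl⟩
    · obtain ⟨j', hsub⟩ := exists_subPiece hs_mono hx hxU
      exact ⟨subPiece N t α s i j', Or.inl ⟨i, j', rfl⟩, hsub,
        mem_subPiece_of_sameSide ht hαle hs_mem hsub hss⟩

lemma main_point (ht : StrictMono t) (hk : 0 < k) (hαle : ∀ i, α i ≤ N)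
    (hαinj : Function.Injective α)
    (hs_mem : ∀ i j, s i j ∈ openPiece N t (α i)) (hs_mono : ∀ i, StrictMono (s i))
    (hcyc : ∀ i : Fin k, ∃ i' : Fin k, ((i' : ℕ) = ((i : ℕ) + 1) % k) ∧
      σ '' openPiece N t (α i) = openPiece N t (α i'))
    (hinvU : AlgInvariant (pcAlgOn (Set.range t ∪ ⋃ i, Set.range (s i))) σ)
    (hinvU' : AlgInvariant (pcAlgOn (Set.range t ∪ ⋃ i, Set.range (s i))) σ.symm)
    {x : ℝ} {i : Fin k} (hx : x ∈ openPiece N t (α i)) :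
    ∃ l : ℕ, 1 ≤ l ∧ l ≤ p + 1 ∧ x ∈ Ctil N t σ α s (k * l) ∧
      ∀ n : ℤ, (sameSide (Set.range t ∪ ⋃ i, Set.range (s i)) x ((σ ^ n) x) ↔
        (((k * l : ℕ) : ℤ) ∣ n)) := by
  have hmemI : ∀ c : ℕ, (σ ^ ((k : ℤ) * c)) x ∈ openPiece N t (α i) := fun c =>
    (zpow_mem_I_iff ht hαle hαinj hcyc hx _).2 (dvd_mul_right _ _)
  -- Step 1 : a bounded positive return
  have hex : ∃ c c' : ℕ, c < c' ∧ c' ≤ p + 1 ∧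
      sameSide (Set.range t ∪ ⋃ i, Set.range (s i))
        ((σ ^ ((k : ℤ) * c)) x) ((σ ^ ((k : ℤ) * c')) x) := by
    by_cases hxU : x ∈ Set.range t ∪ ⋃ i, Set.range (s i)
    · -- x is one of the added jump points
      have hval : ∀ c : Fin (p + 1), ∃ jc : Fin p, (σ ^ ((k : ℤ) * c)) x = s i jc := by
        intro c
        have hyI := hmemI c
        have hyU : (σ ^ ((k : ℤ) * c)) x ∈ Set.range t ∪ ⋃ i, Set.range (s i) := by
          by_contra hyU
          obtain ⟨jc, hjc⟩ := exists_subPiece hs_mono hyI hyU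
          obtain ⟨w, hw, hwne⟩ := subPiece_second_point hjc
          have hss := sameSide_of_same_subPiece ht hαle hαinj hs_mem hs_mono hjc hw
          have hpull := sameSide_pull hinvU hinvU' ((k : ℤ) * c) hss
          have heq := (sameSide_sPoint_iff hxU).1 hpull
          have : w = (σ ^ ((k : ℤ) * c)) x := by
            have := congrArg (fun z => (σ ^ ((k : ℤ) * c)) z) heq
            rw [← heq, ← Equiv.Perm.mul_apply, ← zpow_add]; simp
          exact hwne this
        exact sPoint_cases ht hαle hαinj hs_mem hyI hyU
      set g : Fin (p + 1) → Fin p := fun c => (hval c).choose with hg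
      obtain ⟨c, c', hne, hgeq⟩ := Fintype.exists_ne_map_eq_of_card_lt g (by simp)
      have hgeq' : (hval c).choose = (hval c').choose := hgeq
      have heq : (σ ^ ((k : ℤ) * c)) x = (σ ^ ((k : ℤ) * c')) x := by
        rw [(hval c).choose_spec, (hval c').choose_spec, hgeq']
      rcases lt_or_gt_of_ne (fun h : (c : ℕ) = (c' : ℕ) => hne (Fin.ext h)) with h | h
      · exact ⟨c, c', h, by omega, by rw [heq]; exact sameSide.refl _ _⟩
      · exact ⟨c', c, h, by omega, by rw [heq]; exact sameSide.refl _ _⟩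
    · -- x lies in one of the open subintervals
      obtain ⟨jx, hjx⟩ := exists_subPiece hs_mono hx hxU
      have hval : ∀ c : Fin (p + 2), ∃ jc : Fin (p + 1),
          (σ ^ ((k : ℤ) * c)) x ∈ subPiece N t α s i jc := by
        intro c
        have hyI := hmemI c
        have hyU : (σ ^ ((k : ℤ) * c)) x ∉ Set.range t ∪ ⋃ i, Set.range (s i) := by
          intro hyU
          obtain ⟨w, hw, hwne⟩ := subPiece_second_point hjx
          have hss := sameSide_of_same_subPiece ht hαle hαinj hs_mem hs_mono hjx hw
          have hpush := (sameSide_zpow_iff hinvU hinvU' ((k : ℤ) * c) x w).2 hss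
          have heq := (sameSide_sPoint_iff hyU).1 hpush
          exact hwne ((σ ^ ((k : ℤ) * c)).injective heq)
        exact exists_subPiece hs_mono hyI hyU
      set g : Fin (p + 2) → Fin (p + 1) := fun c => (hval c).choose with hg
      obtain ⟨c, c', hne, hgeq⟩ := Fintype.exists_ne_map_eq_of_card_lt g (by simp)
      have hss : sameSide (Set.range t ∪ ⋃ i, Set.range (s i))
          ((σ ^ ((k : ℤ) * c)) x) ((σ ^ ((k : ℤ) * c')) x) := by
        have hgeq' : (hval c).choose = (hval c').choose := hgeq
        have h1 := (hval c).choose_spec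
        have h2 := (hval c').choose_spec
        rw [hgeq'] at h1
        exact sameSide_of_same_subPiece ht hαle hαinj hs_mem hs_mono h1 h2
      rcases lt_or_gt_of_ne (fun h : (c : ℕ) = (c' : ℕ) => hne (Fin.ext h)) with h | h
      · exact ⟨c, c', h, by omega, hss⟩
      · exact ⟨c', c, h, by omega, hss.symm⟩
  obtain ⟨c, c', hcc, hc'le, hss⟩ := hex
  have hret : sameSide (Set.range t ∪ ⋃ i, Set.range (s i)) x
      ((σ ^ (((k * (c' - c) : ℕ)) : ℤ)) x) := by
    have := sameSide_shift hinvU hinvU' hss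
    have hexp : (k : ℤ) * c' - (k : ℤ) * c = ((k * (c' - c) : ℕ) : ℤ) := by
      push_cast [Nat.cast_sub hcc.le]
      ring
    rwa [hexp] at this
  -- Step 2 : least positive return
  have hQex : ∃ q : ℕ, 0 < q ∧
      sameSide (Set.range t ∪ ⋃ i, Set.range (s i)) x ((σ ^ (q : ℤ)) x) :=
    ⟨k * (c' - c), Nat.mul_pos hk (by omega), hret⟩
  classical
  set r : ℕ := Nat.find hQex with hrdef
  obtain ⟨hrpos, hrss⟩ := Nat.find_spec hQex
  have hrle : r ≤ k * (c' - c) :=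
    Nat.find_min' hQex ⟨Nat.mul_pos hk (by omega), hret⟩
  -- Step 3 : IsLeast over ℤ
  have hZ : IsLeast {j : ℤ | 0 < j ∧
      sameSide (Set.range t ∪ ⋃ i, Set.range (s i)) x ((σ ^ j) x)} (r : ℤ) := by
    constructor
    · exact ⟨by exact_mod_cast hrpos, hrss⟩
    · rintro j ⟨hj1, hj2⟩
      have hj1' : 0 < j.toNat := by omega
      have hjrw : ((j.toNat : ℕ) : ℤ) = j := Int.toNat_of_nonneg hj1.le
      have : r ≤ j.toNat := Nat.find_min' hQex ⟨hj1', by rwa [hjrw]⟩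
      omega
  -- Step 4 : k divides r
  have hkr : k ∣ r := by
    have hrI : (σ ^ (r : ℤ)) x ∈ openPiece N t (α i) := by
      by_cases hxU : x ∈ Set.range t ∪ ⋃ i, Set.range (s i)
      · rw [(sameSide_sPoint_iff hxU).1 hrss]
        exact hx
      · obtain ⟨jx, hjx⟩ := exists_subPiece hs_mono hx hxU
        exact subPiece_subset hs_mem i jx
          (mem_subPiece_of_sameSide ht hαle hs_mem hjx hrss)
    have := (zpow_mem_I_iff ht hαle hαinj hcyc hx (r : ℤ)).1 hrI
    exact_mod_cast this
  set l : ℕ := r / k with hldef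
  have hrkl : r = k * l := (Nat.mul_div_cancel' hkr).symm
  have hl1 : 1 ≤ l := by
    rcases Nat.eq_zero_or_pos l with h | h
    · rw [h, Nat.mul_zero] at hrkl; omega
    · exact h
  have hlp : l ≤ p + 1 := by
    have h1 : k * (c' - c) ≤ k * (p + 1) := Nat.mul_le_mul_left k (by omega)
    have h2 : k * l ≤ k * (p + 1) := by omega
    exact Nat.le_of_mul_le_mul_left h2 hk
  -- Step 5 : the characterization of all returns
  have hchar : ∀ n : ℤ, sameSide (Set.range t ∪ ⋃ i, Set.range (s i)) x ((σ ^ n) x) ↔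
      (((k * l : ℕ) : ℤ) ∣ n) := by
    intro n
    rw [← hrkl]
    exact returns_iff_dvd hinvU hinvU' hZ n
  refine ⟨l, hl1, hlp, ⟨Set.mem_iUnion.2 ⟨i, hx⟩, ?_⟩, hchar⟩
  -- IsLeast for the refined-return set
  have hseteq : {j : ℕ | 0 < j ∧ ∃ P ∈ cyclePieces N t α s, x ∈ P ∧ (σ ^ j) x ∈ P} =
      {q : ℕ | 0 < q ∧
        sameSide (Set.range t ∪ ⋃ i, Set.range (s i)) x ((σ ^ (q : ℤ)) x)} := by
    ext q
    simp only [Set.mem_setOf_eq]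
    exact and_congr_right fun _ => return_iff ht hαle hαinj hs_mem hs_mono hx q
  rw [hseteq, ← hrkl]
  constructor
  · exact ⟨hrpos, hrss⟩
  · rintro q ⟨hq1, hq2⟩
    exact Nat.find_min' hQex ⟨hq1, hq2⟩

end MainPoint
section Bridge

variable {N : ℕ} {t : Fin N → ℝ} {σ : Equiv.Perm ℝ} {k p : ℕ} {α : Fin k → ℕ}
  {s : Fin k → Fin p → ℝ}

lemma Icc_shrink {a b u v : ℝ} (hu : u ∈ Set.Icc (min a b) (max a b))
    (hv : v ∈ Set.Icc (min u a) (max u a)) : v ∈ Set.Icc (min a b) (max a b) := by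
  obtain ⟨h1, h2⟩ := Set.mem_Icc.1 hu
  obtain ⟨h3, h4⟩ := Set.mem_Icc.1 hv
  refine Set.mem_Icc.2 ⟨le_trans (le_min h1 (min_le_left a b)) h3,
    le_trans h4 (max_le h2 (le_max_left a b))⟩

lemma bridge (ht : StrictMono t) (hαle : ∀ i, α i ≤ N) (hαinj : Function.Injective α)
    (hs_mem : ∀ i j, s i j ∈ openPiece N t (α i)) {x y : ℝ}
    (hT : sameSide (Set.range t) x y)
    (hU : ¬ sameSide (Set.range t ∪ ⋃ i, Set.range (s i)) x y) :
    ∃ i, x ∈ openPiece N t (α i) ∧ y ∈ openPiece N t (α i) := by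
  rcases hT with rfl | ⟨hxT, hyT, hnoT⟩
  · exact absurd (sameSide.refl _ _) hU
  unfold sameSide at hU
  push_neg at hU
  obtain ⟨hne, hrest⟩ := hU
  by_cases hxU : x ∈ Set.range t ∪ ⋃ i, Set.range (s i)
  · obtain ⟨i, j, hj⟩ : ∃ i j, s i j = x := by
      rcases hxU with h | h
      · exact absurd h hxT
      · obtain ⟨A, ⟨i, rfl⟩, j, hj⟩ := h
        exact ⟨i, j, hj⟩
    have hxI : x ∈ openPiece N t (α i) := hj ▸ hs_mem i j
    exact ⟨i, hxI, mem_openPiece_of_between ht (hαle i) hxI hyT hnoT⟩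
  by_cases hyU : y ∈ Set.range t ∪ ⋃ i, Set.range (s i)
  · obtain ⟨i, j, hj⟩ : ∃ i j, s i j = y := by
      rcases hyU with h | h
      · exact absurd h hyT
      · obtain ⟨A, ⟨i, rfl⟩, j, hj⟩ := h
        exact ⟨i, j, hj⟩
    have hyI : y ∈ openPiece N t (α i) := hj ▸ hs_mem i j
    have hnoT' : ∀ u ∈ Set.range t, u ∉ Set.Icc (min y x) (max y x) := by
      rw [min_comm, max_comm]
      exact hnoT
    exact ⟨i, mem_openPiece_of_between ht (hαle i) hyI hxT hnoT', hyI⟩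
  obtain ⟨u, hu, huIcc⟩ := hrest hxU hyU
  obtain ⟨i, j, hj⟩ : ∃ i j, s i j = u := by
    rcases hu with h | h
    · exact absurd huIcc (hnoT u h)
    · obtain ⟨A, ⟨i, rfl⟩, j, hj⟩ := h
      exact ⟨i, j, hj⟩
  have huI : u ∈ openPiece N t (α i) := hj ▸ hs_mem i j
  have hnox : ∀ v ∈ Set.range t, v ∉ Set.Icc (min u x) (max u x) :=
    fun v hv hvIcc => hnoT v hv (Icc_shrink huIcc hvIcc)
  have hnoy : ∀ v ∈ Set.range t, v ∉ Set.Icc (min u y) (max u y) := by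
    intro v hv hvIcc
    refine hnoT v hv ?_
    have huIcc' : u ∈ Set.Icc (min y x) (max y x) := by
      rwa [min_comm, max_comm] at huIcc
    have := Icc_shrink huIcc' hvIcc
    rwa [min_comm, max_comm] at this
  exact ⟨i, mem_openPiece_of_between ht (hαle i) huI hxT hnox,
    mem_openPiece_of_between ht (hαle i) huI hyT hnoy⟩

lemma sep_parts (ht : StrictMono t) (hk : 0 < k) (hαle : ∀ i, α i ≤ N)
    (hαinj : Function.Injective α)
    (hs_mem : ∀ i j, s i j ∈ openPiece N t (α i)) (hs_mono : ∀ i, StrictMono (s i))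
    (hcyc : ∀ i : Fin k, ∃ i' : Fin k, ((i' : ℕ) = ((i : ℕ) + 1) % k) ∧
      σ '' openPiece N t (α i) = openPiece N t (α i'))
    (hinvU : AlgInvariant (pcAlgOn (Set.range t ∪ ⋃ i, Set.range (s i))) σ)
    (hinvU' : AlgInvariant (pcAlgOn (Set.range t ∪ ⋃ i, Set.range (s i))) σ.symm)
    (n : ℤ) :
    (¬((k : ℤ) ∣ n) →
      Sep (pcAlgOn (Set.range t ∪ ⋃ i, Set.range (s i))) σ n =
        Sep (pcAlgOn (Set.range t)) σ n) ∧
    (((k : ℤ) ∣ n) →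
      Sep (pcAlgOn (Set.range t ∪ ⋃ i, Set.range (s i))) σ n =
        Sep (pcAlgOn (Set.range t)) σ n ∪
          ⋃ (l : ℕ) (_ : 1 ≤ l ∧ l ≤ p + 1 ∧ ¬((l : ℤ) ∣ n / (k : ℤ))),
            Ctil N t σ α s (k * l)) := by
  have hy : ∀ x : ℝ, (σ ^ n)⁻¹ x = (σ ^ (-n)) x := by
    intro x
    rw [zpow_neg]
  have hkz : (k : ℤ) ≠ 0 := by exact_mod_cast hk.ne'
  constructor
  · intro hnd
    rw [sep_eq, sep_eq]
    ext x
    simp only [Set.mem_setOf_eq, hy x]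
    constructor
    · intro hU hT
      obtain ⟨i, hxI, hyI⟩ := bridge ht hαle hαinj hs_mem hT hU
      have hdn := (zpow_mem_I_iff ht hαle hαinj hcyc hxI (-n)).1 hyI
      exact hnd (dvd_neg.1 hdn)
    · intro hT hU
      exact hT (sameSide_mono Set.subset_union_left hU)
  · intro hd
    rw [sep_eq, sep_eq]
    ext x
    simp only [Set.mem_setOf_eq, Set.mem_union, Set.mem_iUnion, hy x]
    constructor
    · intro hU
      by_cases hT : sameSide (Set.range t) x ((σ ^ (-n)) x)
      · right
        obtain ⟨i, hxI, hyI⟩ := bridge ht hαle hαinj hs_mem hT hU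
        obtain ⟨l, hl1, hlp, hctil, hchar⟩ :=
          main_point ht hk hαle hαinj hs_mem hs_mono hcyc hinvU hinvU' hxI
        refine ⟨l, ⟨hl1, hlp, ?_⟩, hctil⟩
        intro hdvd
        apply hU
        rw [hchar (-n)]
        have hn : (k : ℤ) * (n / (k : ℤ)) = n := Int.mul_ediv_cancel' hd
        have : ((k * l : ℕ) : ℤ) ∣ n := by
          rw [← hn]
          push_cast
          exact mul_dvd_mul_left (k : ℤ) hdvd
        exact dvd_neg.2 this
      · left
        exact hT
    · rintro (hT | ⟨l, ⟨hl1, hlp, hlnd⟩, hctil⟩)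
      · intro hU
        exact hT (sameSide_mono Set.subset_union_left hU)
      · obtain ⟨hxIu, hleast⟩ := hctil
        obtain ⟨i, hxI⟩ := Set.mem_iUnion.1 hxIu
        obtain ⟨l₀, hl₀1, hl₀p, hctil₀, hchar⟩ :=
          main_point ht hk hαle hαinj hs_mem hs_mono hcyc hinvU hinvU' hxI
        have huniq : k * l = k * l₀ := hleast.unique hctil₀.2
        have hll : l = l₀ := Nat.eq_of_mul_eq_mul_left hk huniq
        intro hss
        rw [hchar (-n)] at hss
        have hdvd : ((k * l₀ : ℕ) : ℤ) ∣ n := dvd_neg.1 hss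
        apply hlnd
        rw [hll]
        have hn : (k : ℤ) * (n / (k : ℤ)) = n := Int.mul_ediv_cancel' hd
        have h2 : (k : ℤ) * (l₀ : ℤ) ∣ (k : ℤ) * (n / (k : ℤ)) := by
          rw [hn]
          exact_mod_cast hdvd
        exact (mul_dvd_mul_iff_left hkz).1 h2
end Bridge
section Commutant

variable {σ : Equiv.Perm ℝ}

lemma sum_single_apply (f : ℤ →₀ (ℝ → ℂ)) (F : ℤ → (ℝ → ℂ) → (ℝ → ℂ))
    (hF : ∀ n, F n 0 = 0) (m : ℤ) :
    (f.sum fun n fn => Finsupp.single n (F n fn)) m = F m (f m) := by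
  classical
  rw [Finsupp.sum_apply]
  rw [Finsupp.sum]
  simp only [Finsupp.single_apply]
  rw [Finset.sum_ite_eq' f.support m (fun n => F n (f n))]
  by_cases hm : m ∈ f.support
  · rw [if_pos hm]
  · rw [if_neg hm, Finsupp.notMem_support_iff.1 hm, hF]

lemma cmul_single_right (f : ℤ →₀ (ℝ → ℂ)) (a : ℝ → ℂ) :
    cmul σ f (Finsupp.single 0 a) =
      f.sum fun n fn => Finsupp.single n (fun x => fn x * a ((σ ^ n)⁻¹ x)) := by
  unfold cmul
  refine Finsupp.sum_congr fun n _ => ?_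
  rw [Finsupp.sum_single_index]
  · rw [add_zero]
  · rw [Finsupp.single_eq_zero]
    funext x
    exact mul_zero _

lemma cmul_single_left (f : ℤ →₀ (ℝ → ℂ)) (a : ℝ → ℂ) :
    cmul σ (Finsupp.single 0 a) f =
      f.sum fun n fn => Finsupp.single n (fun x => a x * fn x) := by
  unfold cmul
  rw [Finsupp.sum_single_index]
  · refine Finsupp.sum_congr fun n _ => ?_
    rw [zero_add]
    congr 1
  · rw [Finsupp.sum]
    refine Finset.sum_eq_zero fun n _ => ?_
    rw [Finsupp.single_eq_zero]
    funext x
    exact zero_mul _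

lemma mem_commutant_iff (A B : Subalgebra ℂ (ℝ → ℂ)) (f : ℤ →₀ (ℝ → ℂ)) :
    f ∈ commutant A B σ ↔
      InCrossed B f ∧ ∀ n : ℤ, ∀ x ∈ Sep A σ n, f n x = 0 := by
  unfold commutant
  simp only [Set.mem_setOf_eq]
  refine and_congr_right fun _ => ?_
  have hz1 : ∀ a : ℝ → ℂ, ∀ n : ℤ,
      (fun x => (0 : ℝ → ℂ) x * a ((σ ^ n)⁻¹ x)) = (0 : ℝ → ℂ) := by
    intro a n; funext x; simp
  have hz2 : ∀ a : ℝ → ℂ, ∀ n : ℤ,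
      (fun x => a x * (0 : ℝ → ℂ) x) = (0 : ℝ → ℂ) := by
    intro a n; funext x; simp
  have key : ∀ a : ℝ → ℂ, cmul σ f (Finsupp.single 0 a) = cmul σ (Finsupp.single 0 a) f ↔
      ∀ (n : ℤ) (x : ℝ), f n x * a ((σ ^ n)⁻¹ x) = a x * f n x := by
    intro a
    rw [cmul_single_right, cmul_single_left]
    constructor
    · intro h n x
      have h1 : (f.sum fun n fn =>
            Finsupp.single n (fun x => fn x * a ((σ ^ n)⁻¹ x))) n =
          (f.sum fun n fn => Finsupp.single n (fun x => a x * fn x)) n := by rw [h]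
      rw [sum_single_apply f _ (hz1 a) n, sum_single_apply f _ (fun m => hz2 a m) n] at h1
      exact congrFun h1 x
    · intro h
      refine Finsupp.ext fun n => ?_
      rw [sum_single_apply f _ (hz1 a) n, sum_single_apply f _ (fun m => hz2 a m) n]
      funext x
      exact h n x
  constructor
  · intro h n x hx
    obtain ⟨a, ha, hne⟩ := hx
    have h2 := (key a).1 (h a ha) n x
    have h3 : f n x * (a x - a ((σ ^ n)⁻¹ x)) = 0 := by
      rw [mul_sub, h2]
      ring
    rcases mul_eq_zero.1 h3 with h4 | h4
    · exact h4
    · exact absurd (sub_eq_zero.1 h4) hne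
  · intro h a ha
    rw [key a]
    intro n x
    by_cases hx : x ∈ Sep A σ n
    · rw [h n x hx, zero_mul, mul_zero]
    · have : a x = a ((σ ^ n)⁻¹ x) := by
        by_contra h'
        exact hx ⟨a, ha, h'⟩
      rw [← this]
      ring

end Commutant
lemma pcAlgOn_mono {T U : Set ℝ} (h : T ⊆ U) {a : ℝ → ℂ} (ha : a ∈ pcAlgOn T) :
    a ∈ pcAlgOn U := by
  intro x y hx hy hno
  exact ha x y (fun hxT => hx (h hxT)) (fun hyT => hy (h hyT)) (fun u hu => hno u (h hu))

lemma sep_mono {T U : Set ℝ} (h : T ⊆ U) (σ : Equiv.Perm ℝ) (n : ℤ) :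
    Sep (pcAlgOn T) σ n ⊆ Sep (pcAlgOn U) σ n := by
  rintro x ⟨a, ha, hne⟩
  exact ⟨a, pcAlgOn_mono h ha, hne⟩

/-- in the cyclic setup (with `C_k` consisting of the intervals of the cycle),
`Sepⁿ_{𝒜_S}(ℝ) = Sepⁿ_𝒜(ℝ)` if `k ∤ n`, and
`Sepⁿ_{𝒜_S}(ℝ) = Sepⁿ_𝒜(ℝ) ∪ ⋃_{1 ≤ l ≤ p+1, l ∤ n/k} C̃_{k·l}` if `k ∣ n`; consequently
`𝒜_S' = 𝒜' \ {Σ fₙδⁿ : fₙ ≢ 0 on C̃_{k·l} for some n, l with k ∣ n and l ∤ n/k}`, the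
commutants being taken in `𝒜_S ⋊_σ̃ ℤ`. -/
theorem statement10 (N : ℕ) (t : Fin N → ℝ) (ht : StrictMono t)
    (σ : Equiv.Perm ℝ) (k p : ℕ) (α : Fin k → ℕ) (s : Fin k → Fin p → ℝ)
    (hsetup : CyclicSetup N t σ α s)
    (hCeq : Ck N t σ k = ⋃ i, openPiece N t (α i)) :
    (∀ n : ℤ,
      (¬((k : ℤ) ∣ n) →
        Sep (pcAlgOn (Set.range t ∪ ⋃ i, Set.range (s i))) σ n =
          Sep (pcAlgOn (Set.range t)) σ n) ∧
      ((k : ℤ) ∣ n →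
        Sep (pcAlgOn (Set.range t ∪ ⋃ i, Set.range (s i))) σ n =
          Sep (pcAlgOn (Set.range t)) σ n ∪
            ⋃ (l : ℕ) (_ : 1 ≤ l ∧ l ≤ p + 1 ∧ ¬((l : ℤ) ∣ n / (k : ℤ))),
              Ctil N t σ α s (k * l))) ∧
    commutant (pcAlgOn (Set.range t ∪ ⋃ i, Set.range (s i)))
        (pcAlgOn (Set.range t ∪ ⋃ i, Set.range (s i))) σ =
      commutant (pcAlgOn (Set.range t))
          (pcAlgOn (Set.range t ∪ ⋃ i, Set.range (s i))) σ \
        {f : ℤ →₀ (ℝ → ℂ) | ∃ n : ℤ, ∃ l : ℕ, 1 ≤ l ∧ l ≤ p + 1 ∧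
          (k : ℤ) ∣ n ∧ ¬((l : ℤ) ∣ n / (k : ℤ)) ∧
          ¬(∀ x ∈ Ctil N t σ α s (k * l), f n x = 0)} := by
  obtain ⟨hk, hαle, hαinj, hs_mem, hs_mono, hcyc, hsub, hinvT, hinvT', hinvU, hinvU'⟩ :=
    hsetup
  have hsep := fun n : ℤ =>
    sep_parts ht hk hαle hαinj hs_mem hs_mono hcyc hinvU hinvU' n
  refine ⟨hsep, ?_⟩
  ext f
  rw [Set.mem_diff, mem_commutant_iff, mem_commutant_iff]
  simp only [Set.mem_setOf_eq]
  constructor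
  · rintro ⟨hB, hvanish⟩
    refine ⟨⟨hB, fun n x hx =>
      hvanish n x (sep_mono Set.subset_union_left σ n hx)⟩, ?_⟩
    rintro ⟨n, l, hl1, hlp, hkn, hlnd, hbad⟩
    apply hbad
    intro x hxC
    apply hvanish n x
    rw [(hsep n).2 hkn]
    right
    exact Set.mem_iUnion.2 ⟨l, Set.mem_iUnion.2 ⟨⟨hl1, hlp, hlnd⟩, hxC⟩⟩
  · rintro ⟨⟨hB, hvanish⟩, hnbad⟩
    refine ⟨hB, fun n x hx => ?_⟩
    by_cases hkn : (k : ℤ) ∣ n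
    · rw [(hsep n).2 hkn] at hx
      rcases hx with hx | hx
      · exact hvanish n x hx
      · obtain ⟨l, hmem⟩ := Set.mem_iUnion.1 hx
        obtain ⟨hcond, hxC⟩ := Set.mem_iUnion.1 hmem
        by_contra hfx
        exact hnbad ⟨n, l, hcond.1, hcond.2.1, hkn, hcond.2.2,
          fun hall => hfx (hall x hxC)⟩
    · rw [(hsep n).1 hkn] at hx
      exact hvanish n x hx

end PaperTRS
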